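/- Let d ≥ 2 and m ≥ 2 be integers and g ≥ 0, L ≥ 0 real numbers, and consider the MBSP instance given by the zipper DAG Z(d,m) with P = 2 processors and cache capacity r = d+2. Every valid schedule in which every COMPUTE transition of a node v_i (i ∈ [m]) occurs on processor 1 contains at least (m−1)·(d−1) LOAD transitions on processor 1; consequently, the synchronous cost of every such schedule is at least (m−1)·(d−1)·g. -/

import Mathlib

namespace MBSP

/-- A transition (pebbling move) of a single processor. -/
inductive Op (ν : Type) where
  | load : ν → Op ν
  | save : ν → Op ν
  | compute : ν → Op ν
  | delete : ν → Op ν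
deriving DecidableEq

/-- An MBSP instance: a DAG with compute weights `ω`, memory weights `μ`,
`P` processors, cache capacity `r`, communication cost `g` and synchronization cost `L`. -/
structure Inst (ν : Type) where
  edge : ν → ν → Prop
  ω : ν → ℝ
  μ : ν → ℝ
  P : ℕ
  r : ℝ
  g : ℝ
  L : ℝ

variable {ν : Type} [DecidableEq ν]

def isSource (I : Inst ν) (v : ν) : Prop := ¬ ∃ u, I.edge u v

def isSink (I : Inst ν) (v : ν) : Prop := ¬ ∃ u, I.edge v u

def Acyclic (I : Inst ν) : Prop := ∀ v, ¬ Relation.TransGen I.edge v v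

def opCost (I : Inst ν) : Op ν → ℝ
  | .load v => I.μ v * I.g
  | .save v => I.μ v * I.g
  | .compute v => I.ω v
  | .delete _ => 0

def applyOp (R B : Finset ν) : Op ν → Finset ν × Finset ν
  | .load v => (insert v R, B)
  | .save v => (R, insert v B)
  | .compute v => (insert v R, B)
  | .delete v => (R.erase v, B)

def opOK (I : Inst ν) (R B : Finset ν) : Op ν → Prop
  | .load v => v ∈ B
  | .save v => v ∈ R
  | .compute v => (∃ u, I.edge u v) ∧ ∀ u, I.edge u v → u ∈ R
  | .delete _ => True

/-- The memory bound for a cache content `R`. -/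
def memOK (I : Inst ν) (R : Finset ν) : Prop := ∑ v ∈ R, I.μ v ≤ I.r

/-- Run a sequence of transitions of one processor on a pair (cache, slow memory). -/
def run (R B : Finset ν) : List (Op ν) → Finset ν × Finset ν
  | [] => (R, B)
  | op :: rest => run (applyOp R B op).1 (applyOp R B op).2 rest

/-- Validity of a sequence of transitions of one processor: every precondition holds
when the transition is applied and the memory bound holds throughout. -/
def seqValid (I : Inst ν) (R B : Finset ν) : List (Op ν) → Prop
  | [] => True
  | op :: rest => opOK I R B op ∧ memOK I (applyOp R B op).1 ∧
      seqValid I (applyOp R B op).1 (applyOp R B op).2 rest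

/-- A superstep: for every processor, a compute phase (computes and deletes),
then a save phase, a delete phase and a load phase. -/
structure Superstep (ν : Type) (P : ℕ) where
  comp : Fin P → List (Op ν)
  save : Fin P → List ν
  del : Fin P → List ν
  load : Fin P → List ν

structure Config (ν : Type) (P : ℕ) where
  R : Fin P → Finset ν
  B : Finset ν

abbrev Schedule (ν : Type) (P : ℕ) := List (Superstep ν P)

variable {P : ℕ}

def compOnly (l : List (Op ν)) : Prop :=
  ∀ op ∈ l, (∃ v, op = Op.compute v) ∨ (∃ v, op = Op.delete v)

def afterComp (c : Config ν P) (S : Superstep ν P) (p : Fin P) : Finset ν :=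
  (run (c.R p) c.B (S.comp p)).1

/-- The shared slow memory after the save phases of all processors. -/
def newB (c : Config ν P) (S : Superstep ν P) : Finset ν :=
  c.B ∪ Finset.univ.biUnion (fun p => (S.save p).toFinset)

def afterDel (c : Config ν P) (S : Superstep ν P) (p : Fin P) : Finset ν :=
  (S.del p).foldl Finset.erase (afterComp c S p)

def afterLoad (c : Config ν P) (S : Superstep ν P) (p : Fin P) : Finset ν :=
  afterDel c S p ∪ (S.load p).toFinset

/-- The configuration reached after executing a superstep. -/
def stepConfig (c : Config ν P) (S : Superstep ν P) : Config ν P :=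
  ⟨fun p => afterLoad c S p, newB c S⟩

/-- Validity of a superstep at a configuration. -/
def ssValid (I : Inst ν) (c : Config ν I.P) (S : Superstep ν I.P) : Prop :=
  (∀ p, compOnly (S.comp p)) ∧
  (∀ p, seqValid I (c.R p) c.B (S.comp p)) ∧
  (∀ p, ∀ v ∈ S.save p, v ∈ afterComp c S p) ∧
  (∀ p, ∀ v ∈ S.load p, v ∈ newB c S) ∧
  (∀ p, memOK I (afterLoad c S p))

def runSched (c : Config ν P) : Schedule ν P → Config ν P
  | [] => c
  | S :: rest => runSched (stepConfig c S) rest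

def schedValidFrom (I : Inst ν) (c : Config ν I.P) : Schedule ν I.P → Prop
  | [] => True
  | S :: rest => ssValid I c S ∧ schedValidFrom I (stepConfig c S) rest

/-- `B` is exactly the set of sources of the DAG. -/
def initB (I : Inst ν) (B : Finset ν) : Prop := ∀ v, v ∈ B ↔ isSource I v

/-- A valid MBSP schedule: starts with empty caches and the sources in slow memory,
every transition is legal and the memory bound holds throughout, and at the end
every sink is in slow memory. -/
def Valid (I : Inst ν) (sched : Schedule ν I.P) : Prop :=
  ∃ B0 : Finset ν, initB I B0 ∧
    schedValidFrom I ⟨fun _ => ∅, B0⟩ sched ∧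
    ∀ v, isSink I v → v ∈ (runSched (⟨fun _ => ∅, B0⟩ : Config ν I.P) sched).B

def listCost (I : Inst ν) (l : List (Op ν)) : ℝ := (l.map (opCost I)).sum

def ioCost (I : Inst ν) (l : List ν) : ℝ := (l.map (fun v => I.μ v * I.g)).sum

/-- The synchronous cost of a superstep. -/
noncomputable def ssCost (I : Inst ν) (S : Superstep ν I.P) : ℝ :=
  (⨆ p : Fin I.P, listCost I (S.comp p)) + (⨆ p : Fin I.P, ioCost I (S.save p)) +
    (⨆ p : Fin I.P, ioCost I (S.load p)) + I.L

/-- The synchronous cost of a schedule. -/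
noncomputable def syncCost (I : Inst ν) (sched : Schedule ν I.P) : ℝ :=
  (sched.map (ssCost I)).sum

/-- Finishing times of the saves in a save phase starting at time `t`. -/
def saveFinishes (I : Inst ν) : ℝ → List ν → List (ν × ℝ)
  | _, [] => []
  | t, v :: rest => (v, t + I.μ v * I.g) :: saveFinishes I (t + I.μ v * I.g) rest

def minSaveTime (entries : List (ν × ℝ)) (v : ν) : Option ℝ :=
  ((entries.filter (fun e => e.1 == v)).map Prod.snd).min?

/-- Finishing time of a load phase: each load waits for the value to be available
in slow memory (time `Γ v`). -/
def loadFold (I : Inst ν) (Γ : ν → Option ℝ) : ℝ → List ν → ℝ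
  | t, [] => t
  | t, v :: rest => loadFold I Γ (max t ((Γ v).getD 0) + I.μ v * I.g) rest

/-- One superstep of the asynchronous execution: updates the finishing time of
every processor and the availability times `Γ` of the values in slow memory. -/
def asyncSS (I : Inst ν) (S : Superstep ν I.P)
    (st : (Fin I.P → ℝ) × (ν → Option ℝ)) : (Fin I.P → ℝ) × (ν → Option ℝ) :=
  let t1 : Fin I.P → ℝ := fun p => st.1 p + listCost I (S.comp p)
  let entries : List (ν × ℝ) :=
    ((List.finRange I.P).map (fun p => saveFinishes I (t1 p) (S.save p))).flatten
  let Γ' : ν → Option ℝ := fun v => (st.2 v).orElse (fun _ => minSaveTime entries v)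
  let t2 : Fin I.P → ℝ := fun p => t1 p + ioCost I (S.save p)
  (fun p => loadFold I Γ' (t2 p) (S.load p), Γ')

def asyncRun (I : Inst ν) (st : (Fin I.P → ℝ) × (ν → Option ℝ)) :
    Schedule ν I.P → (Fin I.P → ℝ) × (ν → Option ℝ)
  | [] => st
  | S :: rest => asyncRun I (asyncSS I S st) rest

/-- The asynchronous cost (makespan) of a schedule. -/
noncomputable def asyncCost (I : Inst ν) (sched : Schedule ν I.P) : ℝ :=
  ⨆ p : Fin I.P, (asyncRun I (fun _ => (0 : ℝ), fun _ => none) sched).1 p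

end MBSP

namespace MBSP

/-- Nodes of the zipper DAG `Z(d,m)`: two groups `H₁`, `H₂` of `d` source nodes
each, and two chains `v_1,…,v_m` and `u_1,…,u_m` (index `i ∈ [m]` is `Fin`-value `i-1`). -/
inductive ZNode (d m : ℕ) where
  | h1 : Fin d → ZNode d m
  | h2 : Fin d → ZNode d m
  | v : Fin m → ZNode d m
  | u : Fin m → ZNode d m
deriving DecidableEq, Fintype

/-- Edges of the zipper DAG `Z(d,m)`. -/
def zEdge (d m : ℕ) : ZNode d m → ZNode d m → Prop
  | .v i, .v j => (j : ℕ) = (i : ℕ) + 1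
  | .u i, .u j => (j : ℕ) = (i : ℕ) + 1
  | .h1 _, .u i => Odd ((i : ℕ) + 1)
  | .h1 _, .v i => Even ((i : ℕ) + 1)
  | .h2 _, .v i => Odd ((i : ℕ) + 1)
  | .h2 _, .u i => Even ((i : ℕ) + 1)
  | _, _ => False

/-- The MBSP instance on the zipper DAG `Z(d,m)` with `P = 2` processors, cache
capacity `r`, communication cost `g` and synchronization cost `L`; all compute and
memory weights are `1`. -/
def zipper (d m : ℕ) (r g L : ℝ) : Inst (ZNode d m) where
  edge := zEdge d m
  ω := fun _ => 1
  μ := fun _ => 1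
  P := 2
  r := r
  g := g
  L := L

end MBSP


namespace MBSP

variable {d m : ℕ}

def zk : ZNode d m → ℕ
  | .v i => (i : ℕ) + 1
  | _ => 0

def Kof (s : Finset (ZNode d m)) : ℕ := s.sup zk

def HH (d m : ℕ) : Finset (ZNode d m) :=
  Finset.univ.image ZNode.h1 ∪ Finset.univ.image ZNode.h2

def Hset (d m j : ℕ) : Finset (ZNode d m) :=
  if Odd j then Finset.univ.image ZNode.h2 else Finset.univ.image ZNode.h1

def pot (R : Finset (ZNode d m)) (K : ℕ) : ℕ :=
  max ((d-1) * (K-1) + ((R ∩ Hset d m (K+1)).card - 1)) ((R ∩ HH d m).card)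

lemma h1_inj : Function.Injective (ZNode.h1 : Fin d → ZNode d m) := by
  intro a b h; injection h

lemma h2_inj : Function.Injective (ZNode.h2 : Fin d → ZNode d m) := by
  intro a b h; injection h

lemma Hset_card (j : ℕ) : (Hset d m j).card = d := by
  unfold Hset; split <;>
    simp [Finset.card_image_of_injective _ h2_inj, Finset.card_image_of_injective _ h1_inj]

lemma v_not_mem_Hset (i : Fin m) (j : ℕ) : ZNode.v i ∉ Hset d m j := by
  unfold Hset; split <;> simp

lemma u_not_mem_Hset (i : Fin m) (j : ℕ) : ZNode.u i ∉ Hset d m j := by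
  unfold Hset; split <;> simp

lemma v_not_mem_HH (i : Fin m) : ZNode.v i ∉ HH d m := by simp [HH]

lemma u_not_mem_HH (i : Fin m) : ZNode.u i ∉ HH d m := by simp [HH]

lemma Hset_subset_HH (j : ℕ) : Hset d m j ⊆ HH d m := by
  unfold Hset HH; split
  · exact Finset.subset_union_right
  · exact Finset.subset_union_left

lemma Hset_disjoint_succ (j : ℕ) : Disjoint (Hset d m j) (Hset d m (j+1)) := by
  unfold Hset
  rcases Nat.even_or_odd j with he | ho
  · rw [if_neg (by simp [Nat.not_odd_iff_even]; exact he),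
      if_pos (by rw [Nat.odd_add_one, Nat.not_odd_iff_even]; exact he)]
    simp [Finset.disjoint_left]
  · rw [if_pos ho, if_neg (by rw [Nat.odd_add_one]; simpa [Nat.not_even_iff_odd] using ho)]
    simp [Finset.disjoint_left]

end MBSP
namespace MBSP
variable {d m : ℕ}

lemma le_Kof {s : Finset (ZNode d m)} {x : ZNode d m} (h : x ∈ s) : zk x ≤ Kof s :=
  Finset.le_sup h

lemma Kof_le {s : Finset (ZNode d m)} {K : ℕ} (h : ∀ x ∈ s, zk x ≤ K) : Kof s ≤ K :=
  Finset.sup_le h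

lemma Kof_mono {s t : Finset (ZNode d m)} (h : s ⊆ t) : Kof s ≤ Kof t :=
  Finset.sup_mono h

lemma pot_le_snd (R : Finset (ZNode d m)) (K : ℕ) : (R ∩ HH d m).card ≤ pot R K :=
  le_max_right _ _

lemma pot_le_fst (R : Finset (ZNode d m)) (K : ℕ) :
    (d-1) * (K-1) + ((R ∩ Hset d m (K+1)).card - 1) ≤ pot R K :=
  le_max_left _ _

/-- Main monotonicity lemma: if the max index drops (or stays) and the cached
H-nodes only grow by a set `F` (the loaded ones), the potential grows by ≤ `F.card`. -/
lemma pot_mono {R' R : Finset (ZNode d m)} {K' K : ℕ} (F : Finset (ZNode d m))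
    (hK : K' ≤ K) (hsub : R' ∩ HH d m ⊆ (R ∩ HH d m) ∪ F) :
    pot R' K' ≤ pot R K + F.card := by
  have hh : (R' ∩ HH d m).card ≤ (R ∩ HH d m).card + F.card :=
    le_trans (Finset.card_le_card hsub) (Finset.card_union_le _ _)
  have hx'd : (R' ∩ Hset d m (K'+1)).card ≤ d := by
    calc (R' ∩ Hset d m (K'+1)).card ≤ (Hset d m (K'+1)).card :=
          Finset.card_le_card Finset.inter_subset_right
      _ = d := Hset_card _
  have hx'h : (R' ∩ Hset d m (K'+1)).card ≤ (R' ∩ HH d m).card :=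
    Finset.card_le_card (Finset.inter_subset_inter le_rfl (Hset_subset_HH _))
  rcases eq_or_lt_of_le hK with rfl | hlt
  · -- K' = K
    have hxx : (R' ∩ Hset d m (K'+1)).card ≤ (R ∩ Hset d m (K'+1)).card + F.card := by
      refine le_trans (Finset.card_le_card ?_) (Finset.card_union_le _ _)
      intro x hx
      have hx1 := Finset.mem_inter.mp hx
      have := hsub (Finset.mem_inter.mpr ⟨hx1.1, Hset_subset_HH _ hx1.2⟩)
      rcases Finset.mem_union.mp this with h | h
      · exact Finset.mem_union_left _ (Finset.mem_inter.mpr ⟨(Finset.mem_inter.mp h).1, hx1.2⟩)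
      · exact Finset.mem_union_right _ h
    apply max_le
    · refine le_trans ?_ (Nat.add_le_add_right (pot_le_fst R K') F.card)
      omega
    · exact le_trans hh (Nat.add_le_add_right (pot_le_snd R K') F.card)
  · -- K' < K
    apply max_le
    · rcases Nat.eq_zero_or_pos K' with rfl | hK1
      · -- K' = 0 : first component is the H-term only
        simp only [Nat.zero_add, Nat.zero_sub, Nat.mul_zero, Nat.zero_sub] at hx'h hx'd ⊢
        have : (R' ∩ Hset d m 1).card - 1
            ≤ (R ∩ HH d m).card + F.card := by omega
        exact le_trans this (Nat.add_le_add_right (pot_le_snd R K) F.card)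
      · have h1 : (d-1) * (K'-1) + ((R' ∩ Hset d m (K'+1)).card - 1)
            ≤ (d-1) * (K'-1) + (d-1) := by omega
        have h2 : (d-1) * (K'-1) + (d-1) = (d-1) * K' := by
          have : K' - 1 + 1 = K' := by omega
          calc (d-1) * (K'-1) + (d-1) = (d-1) * ((K'-1) + 1) := by ring
            _ = (d-1) * K' := by rw [this]
        have h3 : (d-1) * K' ≤ (d-1) * (K-1) := Nat.mul_le_mul_left _ (by omega)
        refine le_trans h1 ?_
        rw [h2]
        refine le_trans h3 (le_trans ?_ (Nat.le_add_right _ _))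
        exact le_trans (Nat.le_add_right _ _) (pot_le_fst R K)
    · exact le_trans hh (Nat.add_le_add_right (pot_le_snd R K) F.card)

end MBSP
namespace MBSP
variable {d m : ℕ}

lemma Kof_insert (x : ZNode d m) (s : Finset (ZNode d m)) :
    Kof (insert x s) = max (zk x) (Kof s) := Finset.sup_insert

lemma memOK_card {g L : ℝ} {R : Finset (ZNode d m)}
    (h : memOK (zipper d m ((d:ℝ)+2) g L) R) : R.card ≤ d + 2 := by
  have : (R.card : ℝ) ≤ (d:ℝ) + 2 := by
    simpa [memOK, zipper] using h
  exact_mod_cast this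

lemma pot_insert_u (i : Fin m) (R T : Finset (ZNode d m)) :
    pot (insert (ZNode.u i) R) (Kof (insert (ZNode.u i) R ∪ T)) = pot R (Kof (R ∪ T)) := by
  rw [Finset.insert_union, Kof_insert]
  have : zk (ZNode.u i : ZNode d m) = 0 := rfl
  rw [this, Nat.max_eq_right (Nat.zero_le _)]
  rw [pot, pot, Finset.insert_inter_of_notMem (u_not_mem_Hset _ _),
    Finset.insert_inter_of_notMem (u_not_mem_HH _)]

lemma pot_compute_v {R T : Finset (ZNode d m)} {j : Fin m}
    (hpar : ∀ u, zEdge d m u (ZNode.v j) → u ∈ R)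
    (hcard : (insert (ZNode.v j) R).card ≤ d + 2) :
    pot (insert (ZNode.v j) R) (Kof (insert (ZNode.v j) R ∪ T))
      ≤ pot R (Kof (R ∪ T)) := by
  set K := Kof (R ∪ T) with hKdef
  have hHsub : Hset d m ((j:ℕ)+1) ⊆ R := by
    intro x hx
    unfold Hset at hx
    split at hx
    · obtain ⟨a, -, rfl⟩ := Finset.mem_image.mp hx
      exact hpar _ (show Odd ((j:ℕ)+1) from ‹_›)
    · obtain ⟨a, -, rfl⟩ := Finset.mem_image.mp hx
      exact hpar _ (show Even ((j:ℕ)+1) from Nat.not_odd_iff_even.mp ‹_›)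
  have hjK : (j:ℕ) ≤ K := by
    rcases Nat.eq_zero_or_pos (j:ℕ) with h0 | hpos
    · omega
    · have hjm : (j:ℕ) - 1 < m := by omega
      have hmem : ZNode.v (⟨(j:ℕ)-1, hjm⟩ : Fin m) ∈ R :=
        hpar _ (show (j:ℕ) = ((⟨(j:ℕ)-1, hjm⟩ : Fin m) : ℕ) + 1 by simp; omega)
      have := le_Kof (Finset.mem_union_left T hmem)
      simpa [zk] using le_trans (by omega : (j:ℕ) ≤ ((j:ℕ)-1) + 1) this
  rw [Finset.insert_union, Kof_insert]
  have hzkv : zk (ZNode.v j : ZNode d m) = (j:ℕ) + 1 := rfl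
  rw [hzkv]
  rcases Nat.lt_or_ge (j:ℕ) K with hlt | hge
  · -- index already below K: potential unchanged
    rw [Nat.max_eq_right (by omega), pot, pot,
      Finset.insert_inter_of_notMem (v_not_mem_Hset _ _),
      Finset.insert_inter_of_notMem (v_not_mem_HH _)]
  · -- j = K : the max index increases by one
    have hjeq : (j:ℕ) = K := le_antisymm hjK hge
    rw [Nat.max_eq_left (by omega), hjeq]
    set R' := insert (ZNode.v j) R with hR'def
    have hVin : ZNode.v j ∈ R' := Finset.mem_insert_self _ _
    -- card of R' ∩ Hset (K+2) ≤ 1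
    have hdisjU : Disjoint (R' ∩ Hset d m (K+2)) (Hset d m (K+1) ∪ {ZNode.v j}) := by
      refine Finset.disjoint_union_right.mpr ⟨?_, ?_⟩
      · exact Finset.disjoint_of_subset_left Finset.inter_subset_right
          (Hset_disjoint_succ (K+1)).symm
      · simp [Finset.disjoint_singleton_right, v_not_mem_Hset]
    have hcard1 : (Hset d m (K+1) ∪ {ZNode.v j}).card = d + 1 := by
      rw [Finset.card_union_of_disjoint (by simp [v_not_mem_Hset]), Hset_card]
      simp
    have hsubR' : (R' ∩ Hset d m (K+2)) ∪ (Hset d m (K+1) ∪ {ZNode.v j}) ⊆ R' := by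
      refine Finset.union_subset Finset.inter_subset_left (Finset.union_subset ?_ ?_)
      · rw [← hjeq]
        exact le_trans hHsub (Finset.subset_insert _ _)
      · simp [hR'def]
    have hx1 : (R' ∩ Hset d m (K+2)).card ≤ 1 := by
      have := Finset.card_le_card hsubR'
      rw [Finset.card_union_of_disjoint hdisjU, hcard1] at this
      omega
    -- full H-set in cache at compute time
    have hfull : (R ∩ Hset d m (K+1)).card = d := by
      rw [← hjeq, Finset.inter_eq_right.mpr hHsub, Hset_card]
    have hKK : (d-1) * K ≤ (d-1) * (K-1) + (d-1) := by
      calc (d-1) * K ≤ (d-1) * ((K-1) + 1) := Nat.mul_le_mul_left _ (by omega)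
        _ = (d-1) * (K-1) + (d-1) := by ring
    apply max_le
    · have : (K+1) - 1 = K := by omega
      rw [this, show K+1+1 = K+2 by omega]
      have hterm : (R' ∩ Hset d m (K+2)).card - 1 = 0 := by omega
      rw [hterm, Nat.add_zero]
      refine le_trans hKK (le_trans ?_ (pot_le_fst R K))
      omega
    · rw [Finset.insert_inter_of_notMem (v_not_mem_HH _)]
      exact pot_le_snd R K

end MBSP
namespace MBSP
variable {d m : ℕ}

lemma pot_run {g L : ℝ} (T : Finset (ZNode d m)) :
    ∀ (l : List (Op (ZNode d m))) (R B : Finset (ZNode d m)),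
      compOnly l → seqValid (zipper d m ((d:ℝ)+2) g L) R B l →
      pot ((run R B l).1) (Kof ((run R B l).1 ∪ T)) ≤ pot R (Kof (R ∪ T)) := by
  intro l
  induction l with
  | nil => intro R B _ _; exact le_rfl
  | cons op rest ih =>
    intro R B hco hsv
    obtain ⟨hok, hmem, hrest⟩ := hsv
    have hco' : compOnly rest := fun o ho => hco o (List.mem_cons_of_mem _ ho)
    have step : pot ((applyOp R B op).1) (Kof ((applyOp R B op).1 ∪ T))
        ≤ pot R (Kof (R ∪ T)) := by
      rcases hco op (List.mem_cons_self) with ⟨w, rfl⟩ | ⟨w, rfl⟩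
      · -- compute w
        cases w with
        | h1 a => rcases hok.1 with ⟨u, hu⟩; cases u <;> exact hu.elim
        | h2 a => rcases hok.1 with ⟨u, hu⟩; cases u <;> exact hu.elim
        | u i => exact le_of_eq (pot_insert_u i R T)
        | v j => exact pot_compute_v hok.2 (memOK_card hmem)
      · -- delete w
        have h1 : Kof (R.erase w ∪ T) ≤ Kof (R ∪ T) :=
          Kof_mono (Finset.union_subset_union_left (Finset.erase_subset _ _))
        have h2 : R.erase w ∩ HH d m ⊆ (R ∩ HH d m) ∪ (∅ : Finset (ZNode d m)) := by
          rw [Finset.union_empty]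
          exact Finset.inter_subset_inter (Finset.erase_subset _ _) le_rfl
        simpa [applyOp] using pot_mono ∅ h1 h2
    simp only [run]
    exact le_trans (ih _ _ hco' hrest) step

lemma run_mem {ν : Type} [DecidableEq ν] :
    ∀ (l : List (Op ν)) (R B : Finset ν) (x : ν), x ∈ (run R B l).1 →
      x ∈ R ∨ Op.compute x ∈ l ∨ Op.load x ∈ l := by
  intro l
  induction l with
  | nil => intro R B x hx; exact Or.inl hx
  | cons op rest ih =>
    intro R B x hx
    simp only [run] at hx
    rcases ih _ _ _ hx with h | h | h
    · cases op with
      | load w =>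
        simp only [applyOp] at h
        rcases Finset.mem_insert.mp h with rfl | h
        · right; right; exact List.mem_cons_self
        · exact Or.inl h
      | save w => exact Or.inl h
      | compute w =>
        simp only [applyOp] at h
        rcases Finset.mem_insert.mp h with rfl | h
        · right; left; exact List.mem_cons_self
        · exact Or.inl h
      | delete w => exact Or.inl (Finset.mem_of_mem_erase h)
    · right; left; exact List.mem_cons_of_mem _ h
    · right; right; exact List.mem_cons_of_mem _ h

lemma foldl_erase_subset {ν : Type} [DecidableEq ν] :
    ∀ (l : List ν) (s : Finset ν), l.foldl Finset.erase s ⊆ s := by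
  intro l
  induction l with
  | nil => intro s; exact Finset.Subset.refl _
  | cons a l ih =>
    intro s
    simp only [List.foldl_cons]
    exact Finset.Subset.trans (ih (s.erase a)) (Finset.erase_subset _ _)

end MBSP
namespace MBSP
variable {d m : ℕ}

def potC (c : Config (ZNode d m) 2) : ℕ :=
  pot (c.R 0) (Kof (c.R 0 ∪ (c.R 1 ∪ c.B)))

lemma step_bound {g L : ℝ} {c : Config (ZNode d m) 2} {S : Superstep (ZNode d m) 2}
    (hss : ssValid (zipper d m ((d:ℝ)+2) g L) c S)
    (hpr : ∀ p : Fin 2, ∀ i : Fin m, Op.compute (ZNode.v i) ∈ S.comp p → p = 0) :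
    potC (stepConfig c S) ≤ potC c + (S.load 0).length := by
  obtain ⟨hcomp, hseq, hsave, hload, hmem⟩ := hss
  set T0 := c.R 1 ∪ c.B with hT0
  set A0 := afterComp c S 0 with hA0
  have h1 : pot A0 (Kof (A0 ∪ T0)) ≤ pot (c.R 0) (Kof (c.R 0 ∪ T0)) :=
    pot_run T0 _ _ _ (hcomp (0:Fin 2)) (hseq (0:Fin 2))
  have hAC : ∀ p : Fin 2, ∀ i : Fin m,
      ZNode.v i ∈ afterComp c S p → ZNode.v i ∈ A0 ∪ T0 := by
    intro p i hp'
    fin_cases p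
    · exact Finset.mem_union_left _ hp'
    · rcases run_mem _ _ _ _ hp' with h | h | h
      · exact Finset.mem_union_right _ (Finset.mem_union_left _ h)
      · exact absurd (hpr _ i h) (by decide)
      · rcases hcomp _ _ h with ⟨w, hw⟩ | ⟨w, hw⟩ <;> simp at hw
  have hB' : ∀ i : Fin m, ZNode.v i ∈ newB c S → ZNode.v i ∈ A0 ∪ T0 := by
    intro i hx
    simp only [newB, Finset.mem_union, Finset.mem_biUnion, Finset.mem_univ, true_and,
      List.mem_toFinset] at hx
    rcases hx with hx | ⟨p, hx⟩
    · exact Finset.mem_union_right _ (Finset.mem_union_right _ hx)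
    · exact hAC p i (hsave p _ hx)
  have hKle : Kof ((stepConfig c S).R 0 ∪ ((stepConfig c S).R 1 ∪ (stepConfig c S).B))
      ≤ Kof (A0 ∪ T0) := by
    apply Kof_le
    intro x hx
    cases x with
    | h1 a => exact Nat.zero_le _
    | h2 a => exact Nat.zero_le _
    | u i => exact Nat.zero_le _
    | v i =>
      refine le_Kof ?_
      simp only [stepConfig, afterLoad, Finset.mem_union, List.mem_toFinset] at hx
      rcases hx with (h | h) | ((h | h) | h)
      · exact hAC 0 i (foldl_erase_subset _ _ h)
      · exact hB' i (hload (0:Fin 2) _ h)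
      · exact hAC 1 i (foldl_erase_subset _ _ h)
      · exact hB' i (hload (1:Fin 2) _ h)
      · exact hB' i h
  have hsub : (stepConfig c S).R 0 ∩ HH d m ⊆ (A0 ∩ HH d m) ∪ (S.load 0).toFinset := by
    intro x hx
    obtain ⟨hx1, hx2⟩ := Finset.mem_inter.mp hx
    simp only [stepConfig, afterLoad, Finset.mem_union, List.mem_toFinset] at hx1
    rcases hx1 with h | h
    · exact Finset.mem_union_left _ (Finset.mem_inter.mpr ⟨foldl_erase_subset _ _ h, hx2⟩)
    · exact Finset.mem_union_right _ (List.mem_toFinset.mpr h)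
  have h2 := pot_mono ((S.load 0).toFinset) hKle hsub
  calc potC (stepConfig c S) ≤ pot A0 (Kof (A0 ∪ T0)) + (S.load 0).toFinset.card := h2
    _ ≤ potC c + (S.load 0).length := Nat.add_le_add h1 (List.toFinset_card_le _)

lemma sched_bound {g L : ℝ} :
    ∀ (sched : Schedule (ZNode d m) 2) (c : Config (ZNode d m) 2),
      schedValidFrom (zipper d m ((d:ℝ)+2) g L) c sched →
      (∀ S ∈ sched, ∀ p : Fin 2, ∀ i : Fin m, Op.compute (ZNode.v i) ∈ S.comp p → p = 0) →
      potC (runSched c sched) ≤ potC c + ((sched.map fun S => (S.load 0).length).sum) := by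
  intro sched
  induction sched with
  | nil => intro c _ _; simp [runSched]
  | cons S rest ih =>
    intro c hv hp
    obtain ⟨hss, hrest⟩ := hv
    simp only [runSched, List.map_cons, List.sum_cons]
    have ha := ih (stepConfig c S) hrest (fun S' h => hp S' (List.mem_cons_of_mem _ h))
    have h2 := step_bound hss (hp S (List.mem_cons_self))
    omega

end MBSP
namespace MBSP
variable {d m : ℕ}

lemma source_zk {r g L : ℝ} (hd : 1 ≤ d) (x : ZNode d m)
    (hx : isSource (zipper d m r g L) x) : zk x = 0 := by
  cases x with
  | h1 a => rfl
  | h2 a => rfl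
  | u i => rfl
  | v i =>
    exfalso
    apply hx
    rcases Nat.even_or_odd ((i:ℕ)+1) with he | ho
    · exact ⟨ZNode.h1 ⟨0, hd⟩, he⟩
    · exact ⟨ZNode.h2 ⟨0, hd⟩, ho⟩

lemma potC_init {r g L : ℝ} (hd : 1 ≤ d) {B0 : Finset (ZNode d m)}
    (hB0 : initB (zipper d m r g L) B0) :
    potC (⟨fun _ => ∅, B0⟩ : Config (ZNode d m) 2) = 0 := by
  have hK : Kof ((∅ : Finset (ZNode d m)) ∪ (∅ ∪ B0)) = 0 := by
    apply Nat.le_antisymm _ (Nat.zero_le _)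
    apply Kof_le
    intro x hx
    simp only [Finset.empty_union, Finset.mem_union] at hx
    rw [source_zk hd x ((hB0 x).mp hx)]
  show pot (∅ : Finset (ZNode d m)) (Kof ((∅ : Finset (ZNode d m)) ∪ (∅ ∪ B0))) = 0
  rw [hK]
  simp [pot]

lemma vlast_sink {r g L : ℝ} (hm : 1 ≤ m) :
    isSink (zipper d m r g L) (ZNode.v ⟨m-1, by omega⟩) := by
  rintro ⟨u, hu⟩
  cases u with
  | h1 a => exact hu
  | h2 a => exact hu
  | u i => exact hu
  | v i =>
    have : (i:ℕ) = (m-1) + 1 := hu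
    omega

lemma opCost_nonneg {r g L : ℝ} (hg : 0 ≤ g) (op : Op (ZNode d m)) :
    0 ≤ opCost (zipper d m r g L) op := by
  cases op with
  | load w => simpa [opCost, zipper] using hg
  | save w => simpa [opCost, zipper] using hg
  | compute w => simp [opCost, zipper]
  | delete w => simp [opCost]

lemma listCost_nonneg {r g L : ℝ} (hg : 0 ≤ g) (l : List (Op (ZNode d m))) :
    0 ≤ listCost (zipper d m r g L) l := by
  apply List.sum_nonneg
  intro x hx
  obtain ⟨op, -, rfl⟩ := List.mem_map.mp hx
  exact opCost_nonneg hg op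

lemma ioCost_zipper {r g L : ℝ} (l : List (ZNode d m)) :
    ioCost (zipper d m r g L) l = (l.length : ℝ) * g := by
  induction l with
  | nil => simp [ioCost]
  | cons a l ih =>
    simp only [ioCost, List.map_cons, List.sum_cons, List.length_cons] at *
    rw [ih]
    show (1:ℝ) * g + _ = _
    push_cast
    ring

lemma ssCost_ge {r g L : ℝ} (hg : 0 ≤ g) (hL : 0 ≤ L) (S : Superstep (ZNode d m) 2) :
    ((S.load 0).length : ℝ) * g ≤ ssCost (zipper d m r g L) S := by
  show ((S.load 0).length : ℝ) * g ≤
    (⨆ p : Fin 2, listCost (zipper d m r g L) (S.comp p)) +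
    (⨆ p : Fin 2, ioCost (zipper d m r g L) (S.save p)) +
    (⨆ p : Fin 2, ioCost (zipper d m r g L) (S.load p)) + L
  have hb1 : BddAbove (Set.range fun p : Fin 2 => listCost (zipper d m r g L) (S.comp p)) :=
    Set.Finite.bddAbove (Set.finite_range _)
  have hb2 : BddAbove (Set.range fun p : Fin 2 => ioCost (zipper d m r g L) (S.save p)) :=
    Set.Finite.bddAbove (Set.finite_range _)
  have hb3 : BddAbove (Set.range fun p : Fin 2 => ioCost (zipper d m r g L) (S.load p)) :=
    Set.Finite.bddAbove (Set.finite_range _)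
  have h1 : (0:ℝ) ≤ ⨆ p : Fin 2, listCost (zipper d m r g L) (S.comp p) :=
    le_trans (listCost_nonneg hg (S.comp 0)) (le_ciSup hb1 (0 : Fin 2))
  have h2 : (0:ℝ) ≤ ⨆ p : Fin 2, ioCost (zipper d m r g L) (S.save p) := by
    refine le_trans ?_ (le_ciSup hb2 (0 : Fin 2))
    rw [ioCost_zipper]
    positivity
  have h3 : ((S.load 0).length : ℝ) * g ≤ ⨆ p : Fin 2, ioCost (zipper d m r g L) (S.load p) := by
    rw [← ioCost_zipper (r := r) (L := L)]
    exact le_ciSup hb3 (0 : Fin 2)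
  linarith

lemma sum_len_mul (g : ℝ) : ∀ (l : List ℕ),
    ((l.map fun n : ℕ => (n:ℝ) * g).sum) = (l.sum : ℝ) * g := by
  intro l
  induction l with
  | nil => simp
  | cons a l ih =>
    simp only [List.map_cons, List.sum_cons, List.sum_cons, ih]
    push_cast
    ring

end MBSP

namespace MBSP

/-- For `d, m ≥ 2`, `g, L ≥ 0`, on the zipper DAG `Z(d,m)` with
`P = 2` and `r = d+2`: every valid schedule computing every `v_i` on processor 1
contains at least `(m−1)(d−1)` LOAD transitions on processor 1, hence its
synchronous cost is at least `(m−1)(d−1)·g`. -/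
theorem statement_1 (d m : ℕ) (hd : 2 ≤ d) (hm : 2 ≤ m) (g L : ℝ)
    (hg : 0 ≤ g) (hL : 0 ≤ L)
    (sched : Schedule (ZNode d m) 2)
    (hval : Valid (zipper d m ((d : ℝ) + 2) g L) sched)
    (hproc : ∀ S ∈ sched, ∀ p : Fin 2, ∀ i : Fin m,
      Op.compute (ZNode.v i) ∈ S.comp p → p = 0) :
    (m - 1) * (d - 1) ≤ (sched.map (fun S => (S.load 0).length)).sum ∧
    (((m - 1) * (d - 1) : ℕ) : ℝ) * g ≤ syncCost (zipper d m ((d : ℝ) + 2) g L) sched := by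
  obtain ⟨B0, hB0, hvalid, hsink⟩ := hval
  have hrun := sched_bound sched ⟨fun _ => ∅, B0⟩ hvalid hproc
  have hinit : potC (⟨fun _ => ∅, B0⟩ : Config (ZNode d m) 2) = 0 :=
    potC_init (by omega) hB0
  have hvm : ZNode.v ⟨m-1, by omega⟩ ∈
      (runSched (⟨fun _ => ∅, B0⟩ : Config (ZNode d m) 2) sched).B :=
    hsink _ (vlast_sink (by omega))
  set cf := runSched (⟨fun _ => ∅, B0⟩ : Config (ZNode d m) 2) sched with hcf
  have hK : m ≤ Kof (cf.R 0 ∪ (cf.R 1 ∪ cf.B)) := by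
    have h := le_Kof (Finset.mem_union_right (cf.R 0)
      (Finset.mem_union_right (cf.R 1) hvm))
    have hz : zk (ZNode.v (⟨m-1, by omega⟩ : Fin m) : ZNode d m) = m := by
      show (m-1) + 1 = m
      omega
    rwa [hz] at h
  have hfin : (d-1) * (m-1) ≤ potC cf := by
    refine le_trans ?_ (pot_le_fst (cf.R 0) (Kof (cf.R 0 ∪ (cf.R 1 ∪ cf.B))))
    refine le_trans (Nat.mul_le_mul_left _
      (by omega : m - 1 ≤ Kof (cf.R 0 ∪ (cf.R 1 ∪ cf.B)) - 1)) (Nat.le_add_right _ _)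
  have hN : (m-1) * (d-1) ≤ (sched.map (fun S => (S.load 0).length)).sum := by
    calc (m-1)*(d-1) = (d-1)*(m-1) := Nat.mul_comm _ _
      _ ≤ potC cf := hfin
      _ ≤ potC (⟨fun _ => ∅, B0⟩ : Config (ZNode d m) 2)
            + (sched.map (fun S => (S.load 0).length)).sum := hrun
      _ = (sched.map (fun S => (S.load 0).length)).sum := by rw [hinit, Nat.zero_add]
  refine ⟨hN, ?_⟩
  have hsum : (sched.map fun S => ((S.load 0).length : ℝ) * g).sum
      ≤ syncCost (zipper d m ((d:ℝ)+2) g L) sched := by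
    apply List.sum_le_sum
    intro S _
    exact ssCost_ge hg hL S
  have heq : (sched.map fun S => ((S.load 0).length : ℝ) * g).sum
      = (((sched.map fun S => (S.load 0).length).sum : ℕ) : ℝ) * g := by
    rw [← sum_len_mul g, List.map_map]
    rfl
  calc (((m-1)*(d-1) : ℕ) : ℝ) * g
      ≤ (((sched.map fun S => (S.load 0).length).sum : ℕ) : ℝ) * g := by
        apply mul_le_mul_of_nonneg_right _ hg
        exact_mod_cast hN
    _ = (sched.map fun S => ((S.load 0).length : ℝ) * g).sum := heq.symm
    _ ≤ syncCost (zipper d m ((d:ℝ)+2) g L) sched := hsum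

end MBSP
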